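/- Truth Lemma for model graphs: Let M be a model graph. Then for all states X of M and all formulas φ ∈ X, we have M, X ⊨ φ. -/

import Mathlib

mutual
inductive Formula : Type
  | bot : Formula
  | atom : ℕ → Formula
  | and : Formula → Formula → Formula
  | neg : Formula → Formula
  | box : Program → Formula → Formula
inductive Program : Type
  | atom : ℕ → Program
  | test : Formula → Program
  | union : Program → Program → Program
  | comp : Program → Program → Program
  | star : Program → Program
end

structure KripkeModel (W : Type) : Type where
  rel : ℕ → W → W → Prop
  val : W → ℕ → Prop

mutual
def evaluate {W : Type} (M : KripkeModel W) : W → Formula → Prop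
  | _, .bot => False
  | w, .atom p => M.val w p
  | w, .and φ ψ => evaluate M w φ ∧ evaluate M w ψ
  | w, .neg φ => ¬ evaluate M w φ
  | w, .box α φ => ∀ v, relate M α w v → evaluate M v φ
def relate {W : Type} (M : KripkeModel W) : Program → W → W → Prop
  | .atom a, w, v => M.rel a w v
  | .test τ, w, v => w = v ∧ evaluate M w τ
  | .union α β, w, v => relate M α w v ∨ relate M β w v
  | .comp α β, w, v => ∃ u, relate M α w u ∧ relate M β u v
  | .star α, w, v => Relation.ReflTransGen (fun x y => relate M α x y) w v
end

/-- Relation interpreting a list of programs: composition, identity for `[]`. -/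
def relateSeq {W : Type} (M : KripkeModel W) : List Program → W → W → Prop
  | [], v, w => v = w
  | α :: δ, v, w => ∃ u, relate M α v u ∧ relateSeq M δ u w

/-- Implication, defined from ¬ and ∧. -/
def Formula.imp (φ ψ : Formula) : Formula := .neg (.and φ (.neg ψ))

/-- Disjunction, defined from ¬ and ∧. -/
def Formula.disj (φ ψ : Formula) : Formula := .neg (.and (.neg φ) (.neg ψ))

def semImplies (φ ψ : Formula) : Prop :=
  ∀ (W : Type) (M : KripkeModel W) (w : W), evaluate M w φ → evaluate M w ψ

def semEquiv (φ ψ : Formula) : Prop :=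
  ∀ (W : Type) (M : KripkeModel W) (w : W), evaluate M w φ ↔ evaluate M w ψ

def valid (φ : Formula) : Prop :=
  ∀ (W : Type) (M : KripkeModel W) (w : W), evaluate M w φ

mutual
/-- Uniform substitution on formulas. -/
def substF (σ : ℕ → Formula) : Formula → Formula
  | .bot => .bot
  | .atom p => σ p
  | .and φ ψ => .and (substF σ φ) (substF σ ψ)
  | .neg φ => .neg (substF σ φ)
  | .box α φ => .box (substP σ α) (substF σ φ)
/-- Uniform substitution on programs. -/
def substP (σ : ℕ → Formula) : Program → Program
  | .atom a => .atom a
  | .test τ => .test (substF σ τ)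
  | .union α β => .union (substP σ α) (substP σ β)
  | .comp α β => .comp (substP σ α) (substP σ β)
  | .star α => .star (substP σ α)
end

/-- The substitution ρ/x mapping x to ρ and all other atoms to themselves. -/
def substOne (x : ℕ) (ρ : Formula) : ℕ → Formula := fun p => if p = x then ρ else .atom p

mutual
/-- Occurrence of an atomic proposition in a formula. -/
def occursF (x : ℕ) : Formula → Prop
  | .bot => False
  | .atom p => p = x
  | .and φ ψ => occursF x φ ∨ occursF x ψ
  | .neg φ => occursF x φ
  | .box α φ => occursP x α ∨ occursF x φ
/-- Occurrence of an atomic proposition in a program (including inside tests). -/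
def occursP (x : ℕ) : Program → Prop
  | .atom _ => False
  | .test τ => occursF x τ
  | .union α β => occursP x α ∨ occursP x β
  | .comp α β => occursP x α ∨ occursP x β
  | .star α => occursP x α
end

mutual
/-- Vocabulary of a formula: atomic propositions (inl) and atomic programs (inr). -/
def vocF : Formula → Set (ℕ ⊕ ℕ)
  | .bot => ∅
  | .atom p => {Sum.inl p}
  | .and φ ψ => vocF φ ∪ vocF ψ
  | .neg φ => vocF φ
  | .box α φ => vocP α ∪ vocF φ
def vocP : Program → Set (ℕ ⊕ ℕ)
  | .atom a => {Sum.inr a}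
  | .test τ => vocF τ
  | .union α β => vocP α ∪ vocP β
  | .comp α β => vocP α ∪ vocP β
  | .star α => vocP α
end

/-- Shallow tests of a program. -/
def TestsOf : Program → Set Formula
  | .atom _ => ∅
  | .test τ => {τ}
  | .union α β => TestsOf α ∪ TestsOf β
  | .comp α β => TestsOf α ∪ TestsOf β
  | .star α => TestsOf α

/-- Shallow subprograms of a program. -/
def ProgsOf : Program → Set Program
  | .atom a => {.atom a}
  | .test τ => {.test τ}
  | .union α β => {.union α β} ∪ ProgsOf α ∪ ProgsOf β
  | .comp α β => {.comp α β} ∪ ProgsOf α ∪ ProgsOf β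
  | .star α => {.star α} ∪ ProgsOf α

/-- Iterated boxes: □(δ̄, φ) = [δ₁]…[δₙ]φ. -/
def boxes : List Program → Formula → Formula
  | [], φ => φ
  | α :: δ, φ => .box α (boxes δ φ)

/-- Test profiles of a program: subsets of its shallow tests. -/
def TP (α : Program) : Set (Set Formula) := {ℓ | ℓ ⊆ TestsOf α}

/-- The sets of program lists P^ℓ. -/
def Pfun (ℓ : Set Formula) : Program → Set (List Program)
  | .atom a => {[.atom a]}
  | .test τ => {l | l = [] ∧ τ ∈ ℓ}
  | .union α β => Pfun ℓ α ∪ Pfun ℓ β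
  | .comp α β => {l | ∃ δ ∈ Pfun ℓ α, δ ≠ [] ∧ l = δ ++ [β]} ∪ {l | l ∈ Pfun ℓ β ∧ [] ∈ Pfun ℓ α}
  | .star α => {[]} ∪ {l | ∃ δ ∈ Pfun ℓ α, δ ≠ [] ∧ l = δ ++ [.star α]}

/-- F^ℓ(α): negations of the failed tests. -/
def Ffun (ℓ : Set Formula) (α : Program) : Set Formula :=
  {φ | ∃ τ, τ ∈ TestsOf α ∧ τ ∉ ℓ ∧ φ = Formula.neg τ}

/-- X^ℓ_{α,ψ}. -/
def Xset (ℓ : Set Formula) (α : Program) (ψ : Formula) : Set Formula :=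
  Ffun ℓ α ∪ {φ | ∃ δ ∈ Pfun ℓ α, φ = boxes δ ψ}

/-- unfold_□(α, ψ). -/
def unfoldBox (α : Program) (ψ : Formula) : Set (Set Formula) :=
  {Γ | ∃ ℓ ∈ TP α, Γ = Xset ℓ α ψ}

/-- The function H for diamond unfolding. -/
def Hfun : Program → Set (Set Formula × List Program)
  | .atom a => {(∅, [.atom a])}
  | .test τ => {({τ}, [])}
  | .union α β => Hfun α ∪ Hfun β
  | .comp α β =>
      {p | (∃ X δ, (X, δ) ∈ Hfun α ∧ δ ≠ [] ∧ p = (X, δ ++ [β])) ∨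
           (∃ X Y δ, (X, ([] : List Program)) ∈ Hfun α ∧ (Y, δ) ∈ Hfun β ∧ p = (X ∪ Y, δ))}
  | .star α =>
      insert (∅, ([] : List Program))
        {p | ∃ X δ, (X, δ) ∈ Hfun α ∧ δ ≠ [] ∧ p = (X, δ ++ [Program.star α])}

/-- unfold_◇(α, ψ). -/
def unfoldDiamond (α : Program) (ψ : Formula) : Set (Set Formula) :=
  {Γ | ∃ p ∈ Hfun α, Γ = p.1 ∪ {Formula.neg (boxes p.2 ψ)}}

/-- Saturated sets of formulas. -/
def Saturated (Y : Set Formula) : Prop :=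
  (∀ φ, Formula.neg (.neg φ) ∈ Y → φ ∈ Y) ∧
  (∀ φ ψ, Formula.and φ ψ ∈ Y → φ ∈ Y ∧ ψ ∈ Y) ∧
  (∀ φ ψ, Formula.neg (.and φ ψ) ∈ Y → Formula.neg φ ∈ Y ∨ Formula.neg ψ ∈ Y) ∧
  (∀ α φ, Formula.box α φ ∈ Y → ∃ Δ ∈ unfoldBox α φ, Δ ⊆ Y) ∧
  (∀ α φ, Formula.neg (.box α φ) ∈ Y → ∃ Δ ∈ unfoldDiamond α φ, Δ ⊆ Y)

/-- Single negation. -/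
def snegg : Formula → Formula
  | .neg φ => φ
  | φ => .neg φ

mutual
/-- Subformulas of a formula. -/
def subfF : Formula → Set Formula
  | .bot => {.bot}
  | .atom p => {.atom p}
  | .and φ ψ => {.and φ ψ} ∪ subfF φ ∪ subfF ψ
  | .neg φ => {.neg φ} ∪ subfF φ
  | .box α φ => {.box α φ} ∪ subfP α ∪ subfF φ
/-- Formulas occurring in a program. -/
def subfP : Program → Set Formula
  | .atom _ => ∅
  | .test τ => subfF τ
  | .union α β => subfP α ∪ subfP β
  | .comp α β => subfP α ∪ subfP β
  | .star α => subfP α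
end

/-- Fischer-Ladner closed sets. -/
def FLclosed (S : Set Formula) : Prop :=
  (∀ φ ∈ S, snegg φ ∈ S) ∧
  (∀ φ ∈ S, subfF φ ⊆ S) ∧
  (∀ α β φ, Formula.box (.union α β) φ ∈ S → Formula.box α φ ∈ S ∧ Formula.box β φ ∈ S) ∧
  (∀ α β φ, Formula.box (.comp α β) φ ∈ S → Formula.box α (.box β φ) ∈ S) ∧
  (∀ α φ, Formula.box (.star α) φ ∈ S → Formula.box α (.box (.star α) φ) ∈ S)

/-- Fischer-Ladner closure: the smallest Fischer-Ladner closed superset. -/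
def FL (X : Set Formula) : Set Formula := {φ | ∀ S, X ⊆ S → FLclosed S → φ ∈ S}

mutual
def lenF : Formula → ℕ
  | .bot => 1
  | .atom _ => 1
  | .and φ ψ => 1 + lenF φ + lenF ψ
  | .neg φ => 1 + lenF φ
  | .box α φ => 1 + lenP α + lenF φ
/-- Length (size) of a program. -/
def lenP : Program → ℕ
  | .atom _ => 1
  | .test τ => 1 + lenF τ
  | .union α β => 1 + lenP α + lenP β
  | .comp α β => 1 + lenP α + lenP β
  | .star α => 1 + lenP α
end

/-- Sum of distances along a list of states (consecutive pairs). -/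
noncomputable def listSum {W : Type} (d : W → W → ℕ∞) : List W → ℕ∞
  | [] => 0
  | [_] => 0
  | a :: b :: rest => d a b + listSum d (b :: rest)

open Classical in
/-- The α-distance between states. -/
noncomputable def distance {W : Type} (M : KripkeModel W) : Program → W → W → ℕ∞
  | .atom a, v, w => if M.rel a v w then 1 else ⊤
  | .test τ, v, w => if v = w ∧ evaluate M v τ then 0 else ⊤
  | .union α β, v, w => min (distance M α v w) (distance M β v w)
  | .comp α β, v, w => ⨅ u, distance M α v u + distance M β u w
  | .star α, v, w =>
      ⨅ (l : List W) (_ : l.head? = some v ∧ l.getLast? = some w),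
        listSum (fun x y => distance M α x y) l

open Classical in
/-- Distance along a list of programs. -/
noncomputable def distanceSeq {W : Type} (M : KripkeModel W) : List Program → W → W → ℕ∞
  | [], v, w => if v = w then 0 else ⊤
  | α :: δ, v, w => ⨅ u, distance M α v u + distanceSeq M δ u w

/-- The relation Q_α on a type of "states" S carrying formula membership `mem`. -/
def Qprog {S : Type} (mem : Formula → S → Prop) (R : ℕ → S → S → Prop) : Program → S → S → Prop
  | .atom a => R a
  | .test τ => fun X Y => X = Y ∧ mem τ X
  | .union α β => fun X Y => Qprog mem R α X Y ∨ Qprog mem R β X Y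
  | .comp α β => fun X Y => ∃ U, Qprog mem R α X U ∧ Qprog mem R β U Y
  | .star α => Relation.ReflTransGen (fun X Y => Qprog mem R α X Y)

/-- Q along a list of programs, with Id_W (restricted identity) for the empty list. -/
def Qseq {S : Type} (mem : Formula → S → Prop) (R : ℕ → S → S → Prop) (Wset : Set S) :
    List Program → S → S → Prop
  | [] => fun Y Z => Y = Z ∧ Y ∈ Wset
  | α :: δ => fun Y Z => ∃ U, Qprog mem R α Y U ∧ Qseq mem R Wset δ U Z

/-- A model graph: a Kripke model whose states are locally consistent saturated sets. -/
structure ModelGraph (Wset : Set (Set Formula)) : Type where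
  R : ℕ → ↥Wset → ↥Wset → Prop
  saturated : ∀ X : ↥Wset, Saturated X.val
  noBot : ∀ X : ↥Wset, Formula.bot ∉ X.val
  consistent : ∀ (X : ↥Wset) (p : ℕ),
    Formula.atom p ∈ X.val → Formula.neg (Formula.atom p) ∉ X.val
  boxCond : ∀ (X Y : ↥Wset) (a : ℕ) (φ : Formula),
    R a X Y → Formula.box (.atom a) φ ∈ X.val → φ ∈ Y.val
  diaCond : ∀ (X : ↥Wset) (α : Program) (φ : Formula),
    Formula.neg (.box α φ) ∈ X.val →
      ∃ Y : ↥Wset, Qprog (fun τ Z => τ ∈ Z.val) R α X Y ∧ Formula.neg φ ∈ Y.val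

/-- The Kripke model of a model graph; valuation: p holds at X iff p ∈ X. -/
def mgModel {Wset : Set (Set Formula)} (G : ModelGraph Wset) : KripkeModel ↥Wset :=
  ⟨G.R, fun X p => Formula.atom p ∈ X.val⟩


lemma enat_exists_le_of_iInf_le {ι : Sort*} {f : ι → ℕ∞} {n : ℕ∞} (hn : n ≠ ⊤)
    (h : ⨅ i, f i ≤ n) : ∃ i, f i ≤ n := by
  obtain ⟨m, rfl⟩ : ∃ m : ℕ, n = (m : ℕ∞) := by
    cases n with
    | top => exact absurd rfl hn
    | coe m => exact ⟨m, rfl⟩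
  have h2 : ⨅ i, f i < (m : ℕ∞) + 1 := by
    refine lt_of_le_of_lt h ?_
    have : ((m : ℕ) : ℕ∞) < ((m + 1 : ℕ) : ℕ∞) := Nat.cast_lt.mpr (Nat.lt_succ_self m)
    simpa using this
  obtain ⟨i, hi⟩ := iInf_lt_iff.mp h2
  refine ⟨i, ?_⟩
  cases hfi : f i with
  | top => simp [hfi] at hi
  | coe k =>
    rw [hfi] at hi
    have h3 : ((k : ℕ) : ℕ∞) < ((m + 1 : ℕ) : ℕ∞) := by simpa using hi
    have h4 : k < m + 1 := Nat.cast_lt.mp h3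
    exact Nat.cast_le.mpr (Nat.lt_succ_iff.mp h4)

lemma enat_split {d : ℕ∞} {n : ℕ} (h : 1 + d ≤ (n : ℕ∞)) : ∃ k : ℕ, d = (k : ℕ∞) ∧ k < n := by
  cases d with
  | top => simp at h
  | coe k =>
    refine ⟨k, rfl, ?_⟩
    have h1 : ((1 + k : ℕ) : ℕ∞) ≤ ((n : ℕ) : ℕ∞) := by push_cast; exact h
    have := Nat.cast_le.mp h1
    omega

lemma boxes_append (l1 l2 : List Program) (ψ : Formula) :
    boxes (l1 ++ l2) ψ = boxes l1 (boxes l2 ψ) := by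
  induction l1 with
  | nil => rfl
  | cons γ l ih => simp [boxes, ih]

open Classical in
lemma distanceSeq_nil {W : Type} (M : KripkeModel W) (v w : W) :
    distanceSeq M [] v w = if v = w then (0 : ℕ∞) else ⊤ := by
  simp [distanceSeq]

lemma distanceSeq_nil_self {W : Type} (M : KripkeModel W) (v : W) :
    distanceSeq M [] v v = 0 := by simp [distanceSeq_nil]

lemma distanceSeq_nil_ne {W : Type} (M : KripkeModel W) {v w : W} (h : v ≠ w) :
    distanceSeq M [] v w = ⊤ := by simp [distanceSeq_nil, h]

lemma eq_of_distanceSeq_nil_ne_top {W : Type} {M : KripkeModel W} {v w : W}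
    (h : distanceSeq M [] v w ≠ ⊤) : v = w := by
  by_contra hne
  exact h (distanceSeq_nil_ne M hne)

lemma distanceSeq_cons {W : Type} (M : KripkeModel W) (α : Program) (δ : List Program)
    (v w : W) :
    distanceSeq M (α :: δ) v w = ⨅ u, distance M α v u + distanceSeq M δ u w := by
  simp [distanceSeq]

lemma distanceSeq_single {W : Type} (M : KripkeModel W) (α : Program) (v w : W) :
    distanceSeq M [α] v w = distance M α v w := by
  rw [distanceSeq_cons]
  apply le_antisymm
  · refine (iInf_le _ w).trans ?_
    simp [distanceSeq_nil_self]
  · refine le_iInf fun u => ?_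
    by_cases h : u = w
    · subst h; simp [distanceSeq_nil_self]
    · simp [distanceSeq_nil_ne M h]

lemma distanceSeq_append_le {W : Type} (M : KripkeModel W) (l1 l2 : List Program)
    (v u w : W) :
    distanceSeq M (l1 ++ l2) v w ≤ distanceSeq M l1 v u + distanceSeq M l2 u w := by
  induction l1 generalizing v with
  | nil =>
    by_cases h : v = u
    · subst h; simp [distanceSeq_nil_self]
    · simp [distanceSeq_nil_ne M h]
  | cons γ l ih =>
    rw [List.cons_append, distanceSeq_cons, distanceSeq_cons]
    by_cases htop : (⨅ x, distance M γ v x + distanceSeq M l x u) = ⊤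
    · simp [htop]
    · obtain ⟨x, hx⟩ := enat_exists_le_of_iInf_le htop le_rfl
      refine (iInf_le _ x).trans ?_
      calc distance M γ v x + distanceSeq M (l ++ l2) x w
          ≤ distance M γ v x + (distanceSeq M l x u + distanceSeq M l2 u w) := by
            exact add_le_add_right (ih x) _
        _ = (distance M γ v x + distanceSeq M l x u) + distanceSeq M l2 u w := by
            rw [add_assoc]
        _ ≤ _ := add_le_add_left hx _

lemma listSum_concat {W : Type} (d : W → W → ℕ∞) :
    ∀ (l : List W) (u w : W), l.getLast? = some u →
      listSum d (l ++ [w]) = listSum d l + d u w := by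
  intro l
  induction l with
  | nil => intro u w h; simp at h
  | cons x l ih =>
    intro u w h
    cases l with
    | nil =>
      simp at h
      subst h
      simp [listSum]
    | cons y l' =>
      rw [List.getLast?_cons_cons] at h
      have := ih u w h
      simp only [List.cons_append] at *
      rw [show listSum d (x :: y :: (l' ++ [w])) = d x y + listSum d (y :: (l' ++ [w])) from rfl,
        this, show listSum d (x :: y :: l') = d x y + listSum d (y :: l') from rfl, add_assoc]

lemma distance_star_le {W : Type} (M : KripkeModel W) (α : Program) {v w : W}
    {l : List W} (h1 : l.head? = some v) (h2 : l.getLast? = some w) :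
    distance M (.star α) v w ≤ listSum (fun x y => distance M α x y) l := by
  have : distance M (.star α) v w =
      ⨅ (l : List W) (_ : l.head? = some v ∧ l.getLast? = some w),
        listSum (fun x y => distance M α x y) l := by simp [distance]
  rw [this]
  exact iInf₂_le l ⟨h1, h2⟩

lemma relate_distance_ne_top {W : Type} (M : KripkeModel W) :
    ∀ (α : Program) (v w : W), relate M α v w → distance M α v w ≠ ⊤ := by
  have main : ∀ (n : ℕ) (α : Program), lenP α ≤ n → ∀ (v w : W),
      relate M α v w → distance M α v w ≠ ⊤ := by
    intro n
    induction n using Nat.strong_induction_on with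
    | _ n IH =>
      intro α hlen v w hrel
      cases α with
      | atom a =>
        simp only [relate] at hrel
        simp [distance, hrel]
      | test τ =>
        simp only [relate] at hrel
        obtain ⟨rfl, he⟩ := hrel
        simp [distance, he]
      | union α β =>
        simp only [relate] at hrel
        have hl : lenP α < n ∧ lenP β < n := by
          simp only [lenP] at hlen; omega
        simp only [distance, ne_eq, min_eq_top, not_and]
        rcases hrel with h | h
        · intro h'; exact absurd h' (IH _ hl.1 α le_rfl v w h)
        · intro _; exact IH _ hl.2 β le_rfl v w h
      | comp α β =>
        simp only [relate] at hrel
        obtain ⟨u, h1, h2⟩ := hrel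
        have hl : lenP α < n ∧ lenP β < n := by
          simp only [lenP] at hlen; omega
        have d1 := IH _ hl.1 α le_rfl v u h1
        have d2 := IH _ hl.2 β le_rfl u w h2
        have : distance M (.comp α β) v w ≤ distance M α v u + distance M β u w := by
          simp only [distance]
          exact iInf_le _ u
        intro htop
        rw [htop, top_le_iff] at this
        exact (WithTop.add_ne_top.mpr ⟨d1, d2⟩) this
      | star α =>
        have hl : lenP α < n := by simp only [lenP] at hlen; omega
        simp only [relate] at hrel
        -- build a witnessing list by induction on ReflTransGen
        have : ∃ l : List W, l.head? = some v ∧ l.getLast? = some w ∧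
            listSum (fun x y => distance M α x y) l ≠ ⊤ := by
          induction hrel with
          | refl => exact ⟨[v], rfl, rfl, by simp [listSum]⟩
          | tail hvu hstep ihl =>
            rename_i u' w'
            obtain ⟨l, hh, hg, hs⟩ := ihl
            refine ⟨l ++ [w'], ?_, ?_, ?_⟩
            · cases l with
              | nil => simp at hh
              | cons x l' => simpa using hh
            · simp
            · rw [listSum_concat _ l u' w' hg]
              exact WithTop.add_ne_top.mpr ⟨hs, IH _ hl α le_rfl u' w' hstep⟩
        obtain ⟨l, hh, hg, hs⟩ := this
        intro htop
        have := distance_star_le M α hh hg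
        rw [htop, top_le_iff] at this
        exact hs this
  exact fun α => main (lenP α) α le_rfl

lemma lenP_pos (γ : Program) : 1 ≤ lenP γ := by
  cases γ <;> simp only [lenP] <;> omega

lemma TestsOf_lenF : ∀ (α : Program) (τ : Formula), τ ∈ TestsOf α → lenF τ < lenP α := by
  have main : ∀ (n : ℕ) (α : Program), lenP α ≤ n → ∀ τ, τ ∈ TestsOf α → lenF τ < lenP α := by
    intro n
    induction n using Nat.strong_induction_on with
    | _ n IH =>
      intro α hlen τ hτ
      cases α with
      | atom a => simp [TestsOf] at hτ
      | test σ =>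
        simp only [TestsOf, Set.mem_singleton_iff] at hτ
        subst hτ
        simp [lenP]
      | union α β =>
        simp only [lenP] at hlen ⊢
        rcases hτ with h | h
        · have := IH (lenP α) (by omega) α le_rfl τ h; omega
        · have := IH (lenP β) (by omega) β le_rfl τ h; omega
      | comp α β =>
        simp only [lenP] at hlen ⊢
        rcases hτ with h | h
        · have := IH (lenP α) (by omega) α le_rfl τ h; omega
        · have := IH (lenP β) (by omega) β le_rfl τ h; omega
      | star α =>
        simp only [lenP] at hlen ⊢
        have := IH (lenP α) (by omega) α le_rfl τ hτ; omega
  exact fun α τ h => main (lenP α) α le_rfl τ h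

lemma Pfun_mem_lenP : ∀ (α : Program) (ℓ : Set Formula) (δ : List Program),
    δ ∈ Pfun ℓ α → ∀ γ ∈ δ, lenP γ ≤ lenP α := by
  have main : ∀ (n : ℕ) (α : Program), lenP α ≤ n → ∀ (ℓ : Set Formula) (δ : List Program),
      δ ∈ Pfun ℓ α → ∀ γ ∈ δ, lenP γ ≤ lenP α := by
    intro n
    induction n using Nat.strong_induction_on with
    | _ n IH =>
      intro α hlen ℓ δ hδ γ hγ
      cases α with
      | atom a =>
        simp only [Pfun, Set.mem_singleton_iff] at hδ
        subst hδ
        simp only [List.mem_singleton] at hγ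
        subst hγ; exact le_rfl
      | test σ =>
        obtain ⟨rfl, -⟩ := hδ
        simp at hγ
      | union α β =>
        have hl : lenP α < n ∧ lenP β < n := by simp only [lenP] at hlen; omega
        rcases hδ with h | h
        · exact (IH _ hl.1 α le_rfl ℓ δ h γ hγ).trans (by simp only [lenP]; omega)
        · exact (IH _ hl.2 β le_rfl ℓ δ h γ hγ).trans (by simp only [lenP]; omega)
      | comp α β =>
        have hl : lenP α < n ∧ lenP β < n := by simp only [lenP] at hlen; omega
        rcases hδ with ⟨δ', hδ', -, rfl⟩ | ⟨h, -⟩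
        · rcases List.mem_append.mp hγ with h' | h'
          · exact (IH _ hl.1 α le_rfl ℓ δ' hδ' γ h').trans (by simp only [lenP]; omega)
          · simp only [List.mem_singleton] at h'
            subst h'
            simp only [lenP]; omega
        · exact (IH _ hl.2 β le_rfl ℓ δ h γ hγ).trans (by simp only [lenP]; omega)
      | star α =>
        have hl : lenP α < n := by simp only [lenP] at hlen; omega
        rcases hδ with h | ⟨δ', hδ', -, rfl⟩
        · simp only [Set.mem_singleton_iff] at h
          subst h; simp at hγ
        · rcases List.mem_append.mp hγ with h' | h'
          · exact (IH _ hl α le_rfl ℓ δ' hδ' γ h').trans (by simp only [lenP]; omega)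
          · simp only [List.mem_singleton] at h'
            subst h'; exact le_rfl
  exact fun α => main (lenP α) α le_rfl

lemma Pfun_head_atom : ∀ (α : Program) (ℓ : Set Formula) (γ : Program) (δ : List Program),
    (γ :: δ) ∈ Pfun ℓ α → ∃ a, γ = .atom a := by
  have main : ∀ (n : ℕ) (α : Program), lenP α ≤ n → ∀ (ℓ : Set Formula) γ δ,
      (γ :: δ) ∈ Pfun ℓ α → ∃ a, γ = .atom a := by
    intro n
    induction n using Nat.strong_induction_on with
    | _ n IH =>
      intro α hlen ℓ γ δ hδ
      cases α with
      | atom a =>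
        simp only [Pfun, Set.mem_singleton_iff] at hδ
        exact ⟨a, (List.cons.injEq .. ▸ hδ).1⟩
      | test σ => exact absurd hδ.1 (by simp)
      | union α β =>
        have hl : lenP α < n ∧ lenP β < n := by simp only [lenP] at hlen; omega
        rcases hδ with h | h
        · exact IH _ hl.1 α le_rfl ℓ γ δ h
        · exact IH _ hl.2 β le_rfl ℓ γ δ h
      | comp α β =>
        have hl : lenP α < n ∧ lenP β < n := by simp only [lenP] at hlen; omega
        rcases hδ with ⟨δ', hδ', hne, heq⟩ | ⟨h, -⟩
        · cases δ' with
          | nil => exact absurd rfl hne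
          | cons x l =>
            simp only [List.cons_append, List.cons.injEq] at heq
            exact heq.1 ▸ IH _ hl.1 α le_rfl ℓ x l hδ'
        · exact IH _ hl.2 β le_rfl ℓ γ δ h
      | star α =>
        have hl : lenP α < n := by simp only [lenP] at hlen; omega
        rcases hδ with h | ⟨δ', hδ', hne, heq⟩
        · simp at h
        · cases δ' with
          | nil => exact absurd rfl hne
          | cons x l =>
            simp only [List.cons_append, List.cons.injEq] at heq
            exact heq.1 ▸ IH _ hl α le_rfl ℓ x l hδ'
  exact fun α => main (lenP α) α le_rfl

set_option maxHeartbeats 1000000 in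
lemma existsP {W : Type} (M : KripkeModel W) :
    ∀ (α : Program) (ℓ : Set Formula) (v w : W),
      (∀ τ ∈ TestsOf α, evaluate M v τ → τ ∈ ℓ) →
      distance M α v w ≠ ⊤ →
      ∃ δ ∈ Pfun ℓ α, distanceSeq M δ v w ≤ distance M α v w := by
  have main : ∀ (n : ℕ) (α : Program), lenP α ≤ n → ∀ (ℓ : Set Formula) (v w : W),
      (∀ τ ∈ TestsOf α, evaluate M v τ → τ ∈ ℓ) →
      distance M α v w ≠ ⊤ →
      ∃ δ ∈ Pfun ℓ α, distanceSeq M δ v w ≤ distance M α v w := by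
    intro n
    induction n using Nat.strong_induction_on with
    | _ n IH =>
      intro α hlen ℓ v w htest hne
      cases α with
      | atom a =>
        refine ⟨[.atom a], by simp [Pfun], ?_⟩
        rw [distanceSeq_single]
      | test τ =>
        classical
        have hd : distance M (.test τ) v w
            = if v = w ∧ evaluate M v τ then (0:ℕ∞) else ⊤ := by
          simp [distance]
        rw [hd] at hne ⊢
        by_cases h : v = w ∧ evaluate M v τ
        · obtain ⟨rfl, he⟩ := h
          refine ⟨[], by simp [Pfun]; exact htest τ (by simp [TestsOf]) he, ?_⟩
          simp [distanceSeq_nil_self, he]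
        · simp [h] at hne
      | union α β =>
        have hl : lenP α < n ∧ lenP β < n := by simp only [lenP] at hlen; omega
        have hd : distance M (.union α β) v w = min (distance M α v w) (distance M β v w) := by
          simp [distance]
        have ht1 : ∀ τ ∈ TestsOf α, evaluate M v τ → τ ∈ ℓ :=
          fun τ h => htest τ (Or.inl h)
        have ht2 : ∀ τ ∈ TestsOf β, evaluate M v τ → τ ∈ ℓ :=
          fun τ h => htest τ (Or.inr h)
        rw [hd] at hne ⊢
        rcases le_total (distance M α v w) (distance M β v w) with hle | hle
        · rw [min_eq_left hle] at hne ⊢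
          obtain ⟨δ, hδ, hdd⟩ := IH _ hl.1 α le_rfl ℓ v w ht1 hne
          exact ⟨δ, by simp only [Pfun, Set.mem_union]; exact Or.inl hδ, hdd⟩
        · rw [min_eq_right hle] at hne ⊢
          obtain ⟨δ, hδ, hdd⟩ := IH _ hl.2 β le_rfl ℓ v w ht2 hne
          exact ⟨δ, by simp only [Pfun, Set.mem_union]; exact Or.inr hδ, hdd⟩
      | comp α β =>
        have hl : lenP α < n ∧ lenP β < n := by simp only [lenP] at hlen; omega
        have ht1 : ∀ τ ∈ TestsOf α, evaluate M v τ → τ ∈ ℓ :=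
          fun τ h => htest τ (Or.inl h)
        have hd : distance M (.comp α β) v w = ⨅ u, distance M α v u + distance M β u w := by
          simp [distance]
        rw [hd] at hne ⊢
        obtain ⟨u, hu⟩ := enat_exists_le_of_iInf_le hne le_rfl
        have hne1 : distance M α v u ≠ ⊤ :=
          fun h => hne (top_le_iff.mp (le_self_add.trans hu |>.trans_eq' h) ▸ rfl)
        have hne2 : distance M β u w ≠ ⊤ := by
          intro h
          rw [h, add_top] at hu
          exact hne (top_le_iff.mp hu)
        obtain ⟨δ₁, hδ₁, hd₁⟩ := IH _ hl.1 α le_rfl ℓ v u ht1 hne1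
        cases δ₁ with
        | nil =>
          have hvu : v = u := eq_of_distanceSeq_nil_ne_top
            (fun h => hne1 (top_le_iff.mp (hd₁.trans_eq' h)))
          subst hvu
          have ht2 : ∀ τ ∈ TestsOf β, evaluate M v τ → τ ∈ ℓ :=
            fun τ h => htest τ (Or.inr h)
          obtain ⟨δ₂, hδ₂, hd₂⟩ := IH _ hl.2 β le_rfl ℓ v w ht2 hne2
          refine ⟨δ₂, ?_, hd₂.trans (le_add_self.trans hu)⟩
          simp only [Pfun, Set.mem_union]
          exact Or.inr ⟨hδ₂, hδ₁⟩
        | cons x l =>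
          refine ⟨(x :: l) ++ [β], ?_, ?_⟩
          · simp only [Pfun, Set.mem_union, Set.mem_setOf_eq]
            exact Or.inl ⟨x :: l, hδ₁, by simp, rfl⟩
          calc distanceSeq M ((x :: l) ++ [β]) v w
              ≤ distanceSeq M (x :: l) v u + distanceSeq M [β] u w :=
                distanceSeq_append_le M _ _ v u w
            _ = distanceSeq M (x :: l) v u + distance M β u w := by rw [distanceSeq_single]
            _ ≤ distance M α v u + distance M β u w := add_le_add_left hd₁ _
            _ ≤ _ := hu
      | star α =>
        have hl : lenP α < n := by simp only [lenP] at hlen; omega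
        have hd : distance M (.star α) v w =
            ⨅ (l : List W) (_ : l.head? = some v ∧ l.getLast? = some w),
              listSum (fun x y => distance M α x y) l := by simp [distance]
        -- extract a witnessing list
        obtain ⟨l, hl2⟩ : ∃ l : List W, (⨅ (_ : l.head? = some v ∧ l.getLast? = some w),
            listSum (fun x y => distance M α x y) l) ≤ distance M (.star α) v w := by
          apply enat_exists_le_of_iInf_le hne
          rw [hd]
        have hP : l.head? = some v ∧ l.getLast? = some w := by
          by_contra h
          rw [iInf_neg h, top_le_iff] at hl2
          exact hne hl2
        rw [iInf_pos hP] at hl2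
        clear hd hne
        -- inner induction on the list
        have inner : ∀ (l : List W), l.head? = some v → l.getLast? = some w →
            ∃ δ ∈ Pfun ℓ (.star α),
              distanceSeq M δ v w ≤ listSum (fun x y => distance M α x y) l := by
          clear hl2 hP l
          intro l
          induction l with
          | nil => intro h; simp at h
          | cons x l ihl =>
            intro hh hg
            have hx : x = v := by simpa using hh
            subst hx
            cases l with
            | nil =>
              simp only [List.getLast?_singleton, Option.some.injEq] at hg
              subst hg
              exact ⟨[], by simp [Pfun], by simp [distanceSeq_nil_self, listSum]⟩
            | cons y l' =>
              have hsum : listSum (fun a b => distance M α a b) (x :: y :: l')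
                  = distance M α x y + listSum (fun a b => distance M α a b) (y :: l') := rfl
              by_cases hxy : distance M α x y = ⊤
              · refine ⟨[], by simp [Pfun], ?_⟩
                rw [hsum, hxy, top_add]
                exact le_top
              · obtain ⟨δ', hδ', hdd⟩ := IH _ hl α le_rfl ℓ x y htest hxy
                have hg' : (y :: l').getLast? = some w := by
                  rwa [List.getLast?_cons_cons] at hg
                cases δ' with
                | nil =>
                  have hxy' : x = y := eq_of_distanceSeq_nil_ne_top
                    (fun h => hxy (top_le_iff.mp (hdd.trans_eq' h)))
                  subst hxy'
                  obtain ⟨δ, hδ, hdd2⟩ := ihl rfl hg'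
                  refine ⟨δ, hδ, hdd2.trans ?_⟩
                  rw [hsum]
                  exact le_add_self
                | cons z l'' =>
                  refine ⟨(z :: l'') ++ [.star α], ?_, ?_⟩
                  · simp only [Pfun, Set.mem_union, Set.mem_setOf_eq, Set.mem_singleton_iff]
                    exact Or.inr ⟨z :: l'', hδ', by simp, rfl⟩
                  calc distanceSeq M ((z :: l'') ++ [.star α]) x w
                      ≤ distanceSeq M (z :: l'') x y + distanceSeq M [.star α] y w :=
                        distanceSeq_append_le M _ _ x y w
                    _ = distanceSeq M (z :: l'') x y + distance M (.star α) y w := by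
                        rw [distanceSeq_single]
                    _ ≤ distance M α x y + listSum (fun a b => distance M α a b) (y :: l') :=
                        add_le_add hdd (distance_star_le M α rfl hg')
                    _ = _ := hsum.symm
        obtain ⟨δ, hδ, hdd⟩ := inner l hP.1 hP.2
        exact ⟨δ, hδ, hdd.trans hl2⟩
  exact fun α => main (lenP α) α le_rfl

lemma enat_coe_ne_top (n : ℕ) : (n : ℕ∞) ≠ ⊤ := by
  exact_mod_cast WithTop.coe_ne_top

lemma enat_not_top_le_coe (n : ℕ) : ¬ ((⊤ : ℕ∞) ≤ (n : ℕ∞)) := by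
  rw [top_le_iff]
  exact (enat_coe_ne_top n).symm ∘ Eq.symm

set_option maxHeartbeats 1000000 in
lemma boxesStep {Wset : Set (Set Formula)} (G : ModelGraph Wset) (K : ℕ)
    (hB : ∀ (τ : Formula) (X : ↥Wset), lenF τ < K → Formula.neg τ ∈ X.val →
      ¬ evaluate (mgModel G) X τ) :
    ∀ (n s : ℕ) (δ : List Program) (ψ : Formula) (X Y : ↥Wset),
      (∀ γ ∈ δ, lenP γ ≤ K) →
      distanceSeq (mgModel G) δ X Y ≤ (n : ℕ∞) →
      (δ.map lenP).sum ≤ s →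
      boxes δ ψ ∈ X.val → ψ ∈ Y.val := by
  intro n
  induction n using Nat.strong_induction_on with
  | _ n IHn =>
    intro s
    induction s using Nat.strong_induction_on with
    | _ s IHs =>
      intro δ ψ X Y hK hdist hsum hbox
      cases δ with
      | nil =>
        have hXY : X = Y := by
          apply eq_of_distanceSeq_nil_ne_top (M := mgModel G)
          intro h
          rw [h] at hdist
          exact enat_not_top_le_coe n hdist
        exact hXY ▸ hbox
      | cons γ rest =>
        rw [distanceSeq_cons] at hdist
        obtain ⟨U, hU⟩ := enat_exists_le_of_iInf_le (enat_coe_ne_top n) hdist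
        have hboxγ : Formula.box γ (boxes rest ψ) ∈ X.val := by simpa [boxes] using hbox
        by_cases hat : ∃ a, γ = .atom a
        · obtain ⟨a, rfl⟩ := hat
          have hrel : G.R a X U := by
            by_contra h
            have hd : distance (mgModel G) (.atom a) X U = ⊤ := by
              simp [distance, mgModel, h]
            rw [hd, top_add] at hU
            exact enat_not_top_le_coe n hU
          have h1 : distance (mgModel G) (.atom a) X U = 1 := by
            simp [distance, mgModel, hrel]
          rw [h1] at hU
          obtain ⟨k, hk, hkn⟩ := enat_split hU
          have hnext : boxes rest ψ ∈ U.val := G.boxCond X U a _ hrel hboxγ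
          exact IHn k hkn ((rest.map lenP).sum) rest ψ U Y
            (fun γ' h => hK γ' (List.mem_cons_of_mem _ h)) (le_of_eq hk) le_rfl hnext
        · have hsat := (G.saturated X).2.2.2.1 γ (boxes rest ψ) hboxγ
          obtain ⟨Δ, hΔ, hsub⟩ := hsat
          obtain ⟨ℓ, hTP, rfl⟩ := hΔ
          have htest : ∀ τ ∈ TestsOf γ, evaluate (mgModel G) X τ → τ ∈ ℓ := by
            intro τ hτ hev
            by_contra hτℓ
            have hmem : Formula.neg τ ∈ Xset ℓ γ (boxes rest ψ) := by
              simp only [Xset, Ffun, Set.mem_union, Set.mem_setOf_eq]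
              exact Or.inl ⟨τ, hτ, hτℓ, rfl⟩
            exact hB τ X (lt_of_lt_of_le (TestsOf_lenF γ τ hτ)
              (hK γ (List.mem_cons_self))) (hsub hmem) hev
          have hne : distance (mgModel G) γ X U ≠ ⊤ := by
            intro h
            rw [h, top_add] at hU
            exact enat_not_top_le_coe n hU
          obtain ⟨δ', hδ', hdd⟩ := existsP (mgModel G) γ ℓ X U htest hne
          have hboxes : boxes (δ' ++ rest) ψ ∈ X.val := by
            have hx : boxes δ' (boxes rest ψ) ∈ X.val := by
              refine hsub ?_
              simp only [Xset, Set.mem_union, Set.mem_setOf_eq]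
              exact Or.inr ⟨δ', hδ', rfl⟩
            rwa [boxes_append]
          have hdistall : distanceSeq (mgModel G) (δ' ++ rest) X Y ≤ (n : ℕ∞) :=
            (distanceSeq_append_le _ _ _ X U Y).trans ((add_le_add_left hdd _).trans hU)
          have hKall : ∀ γ' ∈ δ' ++ rest, lenP γ' ≤ K := by
            intro γ' h
            rcases List.mem_append.mp h with h' | h'
            · exact (Pfun_mem_lenP γ ℓ δ' hδ' γ' h').trans (hK γ (List.mem_cons_self))
            · exact hK γ' (List.mem_cons_of_mem _ h')
          cases hδcase : δ' with
          | nil =>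
            subst hδcase
            rw [List.nil_append] at hdistall hboxes
            have hlt : (rest.map lenP).sum < s := by
              have h1 : ((γ :: rest).map lenP).sum = lenP γ + (rest.map lenP).sum := by simp
              have := lenP_pos γ
              omega
            exact IHs ((rest.map lenP).sum) hlt rest ψ X Y
              (fun γ' h => hK γ' (List.mem_cons_of_mem _ h)) hdistall le_rfl hboxes
          | cons e δ'' =>
            subst hδcase
            obtain ⟨a, rfl⟩ := Pfun_head_atom γ ℓ e δ'' hδ'
            rw [List.cons_append, distanceSeq_cons] at hdistall
            obtain ⟨U', hU'⟩ := enat_exists_le_of_iInf_le (enat_coe_ne_top n) hdistall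
            have hrel : G.R a X U' := by
              by_contra h
              have hd : distance (mgModel G) (.atom a) X U' = ⊤ := by
                simp [distance, mgModel, h]
              rw [hd, top_add] at hU'
              exact enat_not_top_le_coe n hU'
            have h1 : distance (mgModel G) (.atom a) X U' = 1 := by
              simp [distance, mgModel, hrel]
            rw [h1] at hU'
            obtain ⟨k, hk, hkn⟩ := enat_split hU'
            have hnext : boxes (δ'' ++ rest) ψ ∈ U'.val := by
              have hb : Formula.box (.atom a) (boxes (δ'' ++ rest) ψ) ∈ X.val := by
                simpa [boxes] using hboxes
              exact G.boxCond X U' a _ hrel hb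
            exact IHn k hkn (((δ'' ++ rest).map lenP).sum) (δ'' ++ rest) ψ U' Y
              (fun γ' h => hKall γ' (List.mem_cons_of_mem _ h)) (le_of_eq hk) le_rfl hnext

lemma Q_relate {Wset : Set (Set Formula)} (G : ModelGraph Wset) :
    ∀ (n : ℕ) (α : Program), lenP α ≤ n →
      (∀ τ ∈ TestsOf α, ∀ Z : ↥Wset, τ ∈ Z.val → evaluate (mgModel G) Z τ) →
      ∀ X Y : ↥Wset, Qprog (fun τ Z => τ ∈ Z.val) G.R α X Y → relate (mgModel G) α X Y := by
  intro n
  induction n using Nat.strong_induction_on with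
  | _ n IH =>
    intro α hlen hA X Y hQ
    cases α with
    | atom a =>
      simp only [Qprog] at hQ
      simpa only [relate, mgModel] using hQ
    | test τ =>
      simp only [Qprog] at hQ
      obtain ⟨rfl, hm⟩ := hQ
      simp only [relate]
      exact ⟨by trivial, hA τ (by simp [TestsOf]) X hm⟩
    | union α β =>
      have hl : lenP α < n ∧ lenP β < n := by simp only [lenP] at hlen; omega
      simp only [Qprog] at hQ
      simp only [relate]
      rcases hQ with h | h
      · exact Or.inl (IH _ hl.1 α le_rfl (fun τ hτ => hA τ (Or.inl hτ)) X Y h)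
      · exact Or.inr (IH _ hl.2 β le_rfl (fun τ hτ => hA τ (Or.inr hτ)) X Y h)
    | comp α β =>
      have hl : lenP α < n ∧ lenP β < n := by simp only [lenP] at hlen; omega
      simp only [Qprog] at hQ
      obtain ⟨U, h1, h2⟩ := hQ
      simp only [relate]
      exact ⟨U, IH _ hl.1 α le_rfl (fun τ hτ => hA τ (Or.inl hτ)) X U h1,
        IH _ hl.2 β le_rfl (fun τ hτ => hA τ (Or.inr hτ)) U Y h2⟩
    | star α =>
      have hl : lenP α < n := by simp only [lenP] at hlen; omega
      simp only [Qprog] at hQ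
      simp only [relate]
      exact Relation.ReflTransGen.mono (fun x y h => IH _ hl α le_rfl hA x y h) X Y hQ

lemma truthLemmaAux {Wset : Set (Set Formula)} (G : ModelGraph Wset) :
    ∀ (n : ℕ) (φ : Formula), lenF φ ≤ n → ∀ X : ↥Wset,
      (φ ∈ X.val → evaluate (mgModel G) X φ) ∧
      (Formula.neg φ ∈ X.val → ¬ evaluate (mgModel G) X φ) := by
  intro n
  induction n using Nat.strong_induction_on with
  | _ n IH =>
    intro φ hlen X
    cases φ with
    | bot =>
      refine ⟨fun h => absurd h (G.noBot X), fun _ hev => ?_⟩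
      simp [evaluate] at hev
    | atom p =>
      constructor
      · intro h
        simpa only [evaluate, mgModel] using h
      · intro h hev
        exact G.consistent X p (by simpa only [evaluate, mgModel] using hev) h
    | and φ ψ =>
      have hl : lenF φ < n ∧ lenF ψ < n := by simp only [lenF] at hlen; omega
      constructor
      · intro h
        obtain ⟨h1, h2⟩ := (G.saturated X).2.1 φ ψ h
        simp only [evaluate]
        exact ⟨(IH _ hl.1 φ le_rfl X).1 h1, (IH _ hl.2 ψ le_rfl X).1 h2⟩
      · intro h hev
        simp only [evaluate] at hev
        rcases (G.saturated X).2.2.1 φ ψ h with h' | h'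
        · exact (IH _ hl.1 φ le_rfl X).2 h' hev.1
        · exact (IH _ hl.2 ψ le_rfl X).2 h' hev.2
    | neg φ =>
      have hl : lenF φ < n := by simp only [lenF] at hlen; omega
      constructor
      · intro h
        simp only [evaluate]
        exact (IH _ hl φ le_rfl X).2 h
      · intro h hev
        simp only [evaluate] at hev
        exact hev ((IH _ hl φ le_rfl X).1 ((G.saturated X).1 φ h))
    | box α ψ =>
      have hl : lenP α < n ∧ lenF ψ < n := by simp only [lenF] at hlen; omega
      constructor
      · intro h
        simp only [evaluate]
        intro Y hrel
        have hne := relate_distance_ne_top (mgModel G) α X Y hrel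
        obtain ⟨m, hm⟩ : ∃ m : ℕ, distance (mgModel G) α X Y = (m : ℕ∞) := by
          cases hd : distance (mgModel G) α X Y with
          | top => exact absurd hd hne
          | coe m => exact ⟨m, rfl⟩
        have hB : ∀ (τ : Formula) (X' : ↥Wset), lenF τ < lenP α →
            Formula.neg τ ∈ X'.val → ¬ evaluate (mgModel G) X' τ :=
          fun τ X' hτ hneg => (IH (lenF τ) (hτ.trans hl.1) τ le_rfl X').2 hneg
        have hψY : ψ ∈ Y.val := by
          refine boxesStep G (lenP α) hB m (lenP α) [α] ψ X Y ?_ ?_ (by simp) ?_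
          · intro γ hγ
            simp only [List.mem_singleton] at hγ
            subst hγ; exact le_rfl
          · rw [distanceSeq_single, hm]
          · simpa [boxes] using h
        exact (IH _ hl.2 ψ le_rfl Y).1 hψY
      · intro h hev
        obtain ⟨Y, hQ, hnegψ⟩ := G.diaCond X α ψ h
        have hA : ∀ τ ∈ TestsOf α, ∀ Z : ↥Wset, τ ∈ Z.val → evaluate (mgModel G) Z τ :=
          fun τ hτ Z hm =>
            (IH (lenF τ) ((TestsOf_lenF α τ hτ).trans hl.1) τ le_rfl Z).1 hm
        have hrel := Q_relate G (lenP α) α le_rfl hA X Y hQ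
        simp only [evaluate] at hev
        exact (IH _ hl.2 ψ le_rfl Y).2 hnegψ (hev Y hrel)

/-- Truth Lemma for model graphs. -/
theorem truthLemma {Wset : Set (Set Formula)} (G : ModelGraph Wset)
    (X : ↥Wset) (φ : Formula) (h : φ ∈ X.val) :
    evaluate (mgModel G) X φ :=
  (truthLemmaAux G (lenF φ) φ le_rfl X).1 h
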